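/- For every integer l > 1 and all integers a, b, c, d with gcd(c,d,l) = 1, the following identity holds in M₄(l), where symbols are indexed by the residues of the indicated integers modulo l: ((−ad−bc+ac+bd)·x² + (ad+bc−2bd)·xy + bd·y²)(c−d,d)_− + (ac·x² + (ad+bc−2ac)·xy + (−ad−bc+ac+bd)·y²)(−c,c−d)_− = (ac·x² + (ad+bc)·xy + bd·y²)(c,d)_−. -/

import Mathlib

open scoped BigOperators

namespace MW

variable (l : ℕ)

/-- Index type for the basis symbols: `0 ↦ x²`, `1 ↦ xy`, `2 ↦ y²`. -/
abbrev Sym := Fin 3 × ZMod l × ZMod l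

/-- The free ℂ-vector space on the symbols. -/
abbrev V := Sym l →₀ ℂ

/-- `gcd(u,v,l) = 1`. -/
def copr (u v : ZMod l) : Prop := Nat.gcd (Nat.gcd (ZMod.val u) (ZMod.val v)) l = 1

instance (u v : ZMod l) : Decidable (copr l u v) := by unfold copr; infer_instance

noncomputable def X2 (u v : ZMod l) : V l := Finsupp.single (0, u, v) 1
noncomputable def XY (u v : ZMod l) : V l := Finsupp.single (1, u, v) 1
noncomputable def Y2 (u v : ZMod l) : V l := Finsupp.single (2, u, v) 1

/-- The relation subspace: the relations of Merel–Shokurov on coprime symbols,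
together with the (dummy) basis vectors at non-coprime indices. -/
noncomputable def Rel : Submodule ℂ (V l) :=
  Submodule.span ℂ
    ({ w | ∃ u v, ¬ copr l u v ∧ (w = X2 l u v ∨ w = XY l u v ∨ w = Y2 l u v) } ∪
     { w | ∃ u v, copr l u v ∧
        (w = X2 l u v + Y2 l v (-u) ∨
         w = XY l u v - XY l v (-u) ∨
         w = Y2 l u v + X2 l v (-u) ∨
         w = XY l v (-u - v) - XY l (-u - v) u + Y2 l (-u - v) u + X2 l u v - XY l u v) })

/-- The space of weight four modular symbols of level `l`. -/
abbrev M := V l ⧸ Rel l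

noncomputable def x2 (u v : ZMod l) : M l := Submodule.Quotient.mk (X2 l u v)
noncomputable def xy (u v : ZMod l) : M l := Submodule.Quotient.mk (XY l u v)
noncomputable def y2 (u v : ZMod l) : M l := Submodule.Quotient.mk (Y2 l u v)

/-- The class of `p₂·x²(u,v) + p₁·xy(u,v) + p₀·y²(u,v)` in `M l`. -/
noncomputable def pcl (p2 p1 p0 : ℂ) (u v : ZMod l) : M l :=
  p2 • x2 l u v + p1 • xy l u v + p0 • y2 l u v

/-- The linear map on `V l` underlying the involution `i`:
`x²(u,v) ↦ x²(-u,v)`, `xy(u,v) ↦ -xy(-u,v)`, `y²(u,v) ↦ y²(-u,v)`. -/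
noncomputable def iV : V l →ₗ[ℂ] V l :=
  Finsupp.lift (V l) ℂ (Sym l) fun p =>
    if p.1 = 1 then -(Finsupp.single (1, -p.2.1, p.2.2) (1 : ℂ))
    else Finsupp.single (p.1, -p.2.1, p.2.2) (1 : ℂ)

/-- Coprimality of integer residues from an integer gcd hypothesis. -/
lemma copr_intCast [NeZero l] (m n : ℤ) (h : Nat.gcd (Int.gcd m n) l = 1) :
    copr l (m : ZMod l) (n : ZMod l) := by
  unfold copr
  set g := Nat.gcd (Nat.gcd (ZMod.val ((m : ZMod l))) (ZMod.val ((n : ZMod l)))) l with hg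
  have hgl : g ∣ l := Nat.gcd_dvd_right _ _
  have hglZ : (g : ℤ) ∣ (l : ℤ) := Int.natCast_dvd_natCast.2 hgl
  have hvm : (g : ℤ) ∣ ((ZMod.val ((m : ZMod l))) : ℤ) :=
    Int.natCast_dvd_natCast.2 ((Nat.gcd_dvd_left _ _).trans (Nat.gcd_dvd_left _ _))
  have hvn : (g : ℤ) ∣ ((ZMod.val ((n : ZMod l))) : ℤ) :=
    Int.natCast_dvd_natCast.2 ((Nat.gcd_dvd_left _ _).trans (Nat.gcd_dvd_right _ _))
  have hm : (g : ℤ) ∣ m := by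
    have hv := ZMod.val_intCast (n := l) m
    rw [hv] at hvm
    have : m % (l : ℤ) + (l : ℤ) * (m / (l : ℤ)) = m := Int.emod_add_mul_ediv m l
    rw [← this]
    exact dvd_add hvm (hglZ.mul_right _)
  have hn : (g : ℤ) ∣ n := by
    have hv := ZMod.val_intCast (n := l) n
    rw [hv] at hvn
    have : n % (l : ℤ) + (l : ℤ) * (n / (l : ℤ)) = n := Int.emod_add_mul_ediv n l
    rw [← this]
    exact dvd_add hvn (hglZ.mul_right _)
  have hgcd : g ∣ Nat.gcd (Int.gcd m n) l :=
    Nat.dvd_gcd (Int.natCast_dvd_natCast.mp (Int.dvd_coe_gcd hm hn)) hgl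
  rw [h] at hgcd
  exact Nat.dvd_one.mp hgcd

lemma relq1 (u v : ZMod l) (h : copr l u v) : x2 l u v + y2 l v (-u) = 0 := by
  rw [x2, y2, ← Submodule.Quotient.mk_add, Submodule.Quotient.mk_eq_zero]
  exact Submodule.subset_span (Set.mem_union_right _ ⟨u, v, h, Or.inl rfl⟩)

lemma relq2 (u v : ZMod l) (h : copr l u v) : xy l u v - xy l v (-u) = 0 := by
  simp only [xy]
  rw [← Submodule.Quotient.mk_sub, Submodule.Quotient.mk_eq_zero]
  exact Submodule.subset_span (Set.mem_union_right _ ⟨u, v, h, Or.inr (Or.inl rfl)⟩)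

lemma relq3 (u v : ZMod l) (h : copr l u v) : y2 l u v + x2 l v (-u) = 0 := by
  rw [y2, x2, ← Submodule.Quotient.mk_add, Submodule.Quotient.mk_eq_zero]
  exact Submodule.subset_span (Set.mem_union_right _ ⟨u, v, h, Or.inr (Or.inr (Or.inl rfl))⟩)

lemma relq4 (u v : ZMod l) (h : copr l u v) :
    xy l v (-u - v) - xy l (-u - v) u + y2 l (-u - v) u + x2 l u v - xy l u v = 0 := by
  have heq : xy l v (-u - v) - xy l (-u - v) u + y2 l (-u - v) u + x2 l u v - xy l u v
      = Submodule.Quotient.mk (p := Rel l)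
        (XY l v (-u - v) - XY l (-u - v) u + Y2 l (-u - v) u + X2 l u v - XY l u v) := by
    simp [xy, x2, y2, Submodule.Quotient.mk_add, Submodule.Quotient.mk_sub]
  rw [heq, Submodule.Quotient.mk_eq_zero]
  exact Submodule.subset_span
    (Set.mem_union_right _ ⟨u, v, h, Or.inr (Or.inr (Or.inr rfl))⟩)

end MW

/-- Transfer a gcd-with-`l` hypothesis along divisibility of a new pair. -/
lemma gcd_trans (l : ℕ) (m n m' n' : ℤ) (hm : (Int.gcd m' n' : ℤ) ∣ m)
    (hn : (Int.gcd m' n' : ℤ) ∣ n) (h : Nat.gcd (Int.gcd m n) l = 1) :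
    Nat.gcd (Int.gcd m' n') l = 1 := by
  refine Nat.dvd_one.mp ?_
  rw [← h]
  refine Nat.dvd_gcd (Int.natCast_dvd_natCast.mp (Int.dvd_coe_gcd ?_ ?_)) (Nat.gcd_dvd_right _ _)
  · exact (Int.natCast_dvd_natCast.2 (Nat.gcd_dvd_left _ _)).trans hm
  · exact (Int.natCast_dvd_natCast.2 (Nat.gcd_dvd_left _ _)).trans hn

open MW in
theorem stmt17 (l : ℕ) (hl : 1 < l)
    (hi : Rel l ≤ (Rel l).comap (iV l))
    (a b c d : ℤ) (h : Nat.gcd (Int.gcd c d) l = 1) :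
    (2 : ℂ)⁻¹ • (pcl l ((-(a*d) - b*c + a*c + b*d : ℤ) : ℂ) ((a*d + b*c - 2*(b*d) : ℤ) : ℂ)
          ((b*d : ℤ) : ℂ) ((c : ZMod l) - (d : ZMod l)) ((d : ZMod l))
        - Submodule.mapQ (Rel l) (Rel l) (iV l) hi
          (pcl l ((-(a*d) - b*c + a*c + b*d : ℤ) : ℂ) ((a*d + b*c - 2*(b*d) : ℤ) : ℂ)
            ((b*d : ℤ) : ℂ) ((c : ZMod l) - (d : ZMod l)) ((d : ZMod l)))) +
    (2 : ℂ)⁻¹ • (pcl l ((a*c : ℤ) : ℂ) ((a*d + b*c - 2*(a*c) : ℤ) : ℂ)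
          ((-(a*d) - b*c + a*c + b*d : ℤ) : ℂ) (-(c : ZMod l)) ((c : ZMod l) - (d : ZMod l))
        - Submodule.mapQ (Rel l) (Rel l) (iV l) hi
          (pcl l ((a*c : ℤ) : ℂ) ((a*d + b*c - 2*(a*c) : ℤ) : ℂ)
            ((-(a*d) - b*c + a*c + b*d : ℤ) : ℂ) (-(c : ZMod l)) ((c : ZMod l) - (d : ZMod l)))) =
    (2 : ℂ)⁻¹ • (pcl l ((a*c : ℤ) : ℂ) ((a*d + b*c : ℤ) : ℂ) ((b*d : ℤ) : ℂ)
          ((c : ZMod l)) ((d : ZMod l))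
        - Submodule.mapQ (Rel l) (Rel l) (iV l) hi
          (pcl l ((a*c : ℤ) : ℂ) ((a*d + b*c : ℤ) : ℂ) ((b*d : ℤ) : ℂ)
            ((c : ZMod l)) ((d : ZMod l)))) := by
  haveI : NeZero l := ⟨by omega⟩
  -- gcd facts for the auxiliary pairs
  have h2 : Nat.gcd (Int.gcd (c - d) d) l = 1 := by
    refine gcd_trans l c d _ _ ?_ ?_ h
    · have h1 := Int.gcd_dvd_left (a := c - d) (b := d)
      have h2 := Int.gcd_dvd_right (a := c - d) (b := d)
      simpa using dvd_add h1 h2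
    · exact Int.gcd_dvd_right (a := c - d) (b := d)
  have h3 : Nat.gcd (Int.gcd (-c) (c - d)) l = 1 := by
    refine gcd_trans l c d _ _ ?_ ?_ h
    · exact (dvd_neg).mp (Int.gcd_dvd_left (a := -c) (b := c - d))
    · have h1 := Int.gcd_dvd_left (a := -c) (b := c - d)
      have h2 := Int.gcd_dvd_right (a := -c) (b := c - d)
      have h3 := dvd_add h1 h2
      rw [show -c + (c - d) = -d by ring] at h3
      exact (dvd_neg).mp h3
  have h4 : Nat.gcd (Int.gcd d (-c)) l = 1 := by
    refine gcd_trans l c d _ _ ?_ ?_ h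
    · exact (dvd_neg).mp (Int.gcd_dvd_right (a := d) (b := -c))
    · exact Int.gcd_dvd_left (a := d) (b := -c)
  -- coprimality of the residue pairs
  have hc : copr l (c : ZMod l) (d : ZMod l) := copr_intCast l c d h
  have hcd : copr l ((c : ZMod l) - (d : ZMod l)) (d : ZMod l) := by
    have := copr_intCast l (c - d) d h2
    push_cast at this
    exact this
  have hnc : copr l (-(c : ZMod l)) ((c : ZMod l) - (d : ZMod l)) := by
    have := copr_intCast l (-c) (c - d) h3
    push_cast at this
    exact this
  have hdc : copr l (d : ZMod l) (-(c : ZMod l)) := by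
    have := copr_intCast l d (-c) h4
    push_cast at this
    exact this
  -- the relation elements
  have r1 := relq1 l (c : ZMod l) (d : ZMod l) hc
  have r2 := relq2 l (c : ZMod l) (d : ZMod l) hc
  have r3 := relq3 l (c : ZMod l) (d : ZMod l) hc
  have r4a := relq4 l ((c : ZMod l) - (d : ZMod l)) (d : ZMod l) hcd
  have r4b := relq4 l (-(c : ZMod l)) ((c : ZMod l) - (d : ZMod l)) hnc
  have r4c := relq4 l (d : ZMod l) (-(c : ZMod l)) hdc
  rw [show -((c : ZMod l) - (d : ZMod l)) - (d : ZMod l) = -(c : ZMod l) by ring] at r4a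
  rw [show -(-(c : ZMod l)) - ((c : ZMod l) - (d : ZMod l)) = (d : ZMod l) by ring] at r4b
  rw [show -(d : ZMod l) - (-(c : ZMod l)) = (c : ZMod l) - (d : ZMod l) by ring] at r4c
  -- the key identity, without the involution
  have key : pcl l ((-(a*d) - b*c + a*c + b*d : ℤ) : ℂ) ((a*d + b*c - 2*(b*d) : ℤ) : ℂ)
        ((b*d : ℤ) : ℂ) ((c : ZMod l) - (d : ZMod l)) ((d : ZMod l))
      + pcl l ((a*c : ℤ) : ℂ) ((a*d + b*c - 2*(a*c) : ℤ) : ℂ)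
        ((-(a*d) - b*c + a*c + b*d : ℤ) : ℂ) (-(c : ZMod l)) ((c : ZMod l) - (d : ZMod l))
      = pcl l ((a*c : ℤ) : ℂ) ((a*d + b*c : ℤ) : ℂ) ((b*d : ℤ) : ℂ)
        ((c : ZMod l)) ((d : ZMod l)) := by
    rw [← sub_eq_zero]
    have expand : pcl l ((-(a*d) - b*c + a*c + b*d : ℤ) : ℂ) ((a*d + b*c - 2*(b*d) : ℤ) : ℂ)
          ((b*d : ℤ) : ℂ) ((c : ZMod l) - (d : ZMod l)) ((d : ZMod l))
        + pcl l ((a*c : ℤ) : ℂ) ((a*d + b*c - 2*(a*c) : ℤ) : ℂ)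
          ((-(a*d) - b*c + a*c + b*d : ℤ) : ℂ) (-(c : ZMod l)) ((c : ZMod l) - (d : ZMod l))
        - pcl l ((a*c : ℤ) : ℂ) ((a*d + b*c : ℤ) : ℂ) ((b*d : ℤ) : ℂ)
          ((c : ZMod l)) ((d : ZMod l))
        = (-((a : ℂ) * c)) •
            (x2 l (c : ZMod l) (d : ZMod l) + y2 l (d : ZMod l) (-(c : ZMod l)))
        + (-((a : ℂ) * d + (b : ℂ) * c)) •
            (xy l (c : ZMod l) (d : ZMod l) - xy l (d : ZMod l) (-(c : ZMod l)))
        + (-((b : ℂ) * d)) •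
            (y2 l (c : ZMod l) (d : ZMod l) + x2 l (d : ZMod l) (-(c : ZMod l)))
        + (((a : ℂ) - b) * ((c : ℂ) - d)) •
            (xy l (d : ZMod l) (-(c : ZMod l))
              - xy l (-(c : ZMod l)) ((c : ZMod l) - (d : ZMod l))
              + y2 l (-(c : ZMod l)) ((c : ZMod l) - (d : ZMod l))
              + x2 l ((c : ZMod l) - (d : ZMod l)) (d : ZMod l)
              - xy l ((c : ZMod l) - (d : ZMod l)) (d : ZMod l))
        + ((a : ℂ) * c) •
            (xy l ((c : ZMod l) - (d : ZMod l)) (d : ZMod l)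
              - xy l (d : ZMod l) (-(c : ZMod l))
              + y2 l (d : ZMod l) (-(c : ZMod l))
              + x2 l (-(c : ZMod l)) ((c : ZMod l) - (d : ZMod l))
              - xy l (-(c : ZMod l)) ((c : ZMod l) - (d : ZMod l)))
        + ((b : ℂ) * d) •
            (xy l (-(c : ZMod l)) ((c : ZMod l) - (d : ZMod l))
              - xy l ((c : ZMod l) - (d : ZMod l)) (d : ZMod l)
              + y2 l ((c : ZMod l) - (d : ZMod l)) (d : ZMod l)
              + x2 l (d : ZMod l) (-(c : ZMod l))
              - xy l (d : ZMod l) (-(c : ZMod l))) := by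
      simp only [pcl]
      push_cast
      module
    rw [expand, r1, r2, r3, r4a, r4b, r4c]
    simp
  -- assemble the minus-symmetrized identity
  have final : ∀ x y z : M l, x + y = z →
      (2 : ℂ)⁻¹ • (x - Submodule.mapQ (Rel l) (Rel l) (iV l) hi x)
      + (2 : ℂ)⁻¹ • (y - Submodule.mapQ (Rel l) (Rel l) (iV l) hi y)
      = (2 : ℂ)⁻¹ • (z - Submodule.mapQ (Rel l) (Rel l) (iV l) hi z) := by
    intro x y z hxyz
    rw [← hxyz, map_add]
    module
  exact final _ _ _ key
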